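/- If R: V → G is a relative Rota-Baxter operator of weight 0, then V with the multiplication u * v = u + Φ(R(u))v is a group with identity 0, where the inverse of u is u† = −Φ(R(u)⁻¹)u. -/

import Mathlib

theorem rrb_descendent_group {G V : Type*} [Group G] [AddCommGroup V]
    (Φ : G →* Multiplicative (AddAut V)) (R : V → G)
    (hR : ∀ u v : V, R u * R v = R (u + (Φ (R u)).toAdd v)) :
    (∀ u v w : V, (u + (Φ (R u)).toAdd v) + (Φ (R (u + (Φ (R u)).toAdd v))).toAdd w
        = u + (Φ (R u)).toAdd (v + (Φ (R v)).toAdd w)) ∧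
    (∀ u : V, (0 : V) + (Φ (R 0)).toAdd u = u) ∧
    (∀ u : V, u + (Φ (R u)).toAdd (0 : V) = u) ∧
    (∀ u : V, u + (Φ (R u)).toAdd (-((Φ ((R u)⁻¹)).toAdd u)) = 0) ∧
    (∀ u : V, -((Φ ((R u)⁻¹)).toAdd u) + (Φ (R (-((Φ ((R u)⁻¹)).toAdd u)))).toAdd u = 0) := by
  have hR0 : R 0 = 1 := by
    have h := hR 0 0
    have h2 : (0 : V) + (Φ (R 0)).toAdd 0 = 0 := by simp
    rw [h2] at h
    exact mul_eq_left.mp h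
  have hinv : ∀ u : V, u + (Φ (R u)).toAdd (-((Φ ((R u)⁻¹)).toAdd u)) = 0 := by
    intro u
    have : (Φ (R u)).toAdd (-((Φ ((R u)⁻¹)).toAdd u)) = -u := by
      rw [map_neg]
      congr 1
      have : (Φ (R u)).toAdd ((Φ ((R u)⁻¹)).toAdd u) = (Φ (R u) * Φ ((R u)⁻¹)).toAdd u := rfl
      rw [this, ← Φ.map_mul]
      simp
    rw [this]; simp
  refine ⟨?_, ?_, ?_, hinv, ?_⟩
  · intro u v w
    rw [← hR u v, Φ.map_mul]
    have : (Φ (R u) * Φ (R v)).toAdd w = (Φ (R u)).toAdd ((Φ (R v)).toAdd w) := rfl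
    rw [this, map_add, add_assoc]
  · intro u; rw [hR0]; simp
  · intro u; simp
  · intro u
    set w := -((Φ ((R u)⁻¹)).toAdd u) with hw
    have hRw : R w = (R u)⁻¹ := by
      have h := hR u w
      rw [hinv u, hR0] at h
      exact eq_inv_of_mul_eq_one_right h
    rw [hRw, hw]; simp
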